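/- Let γ = (γ_j)_{j∈ℤ} be a sequence of Hénon-form maps, and suppose there exists R₀ > 0 such that for every R > R₀ there exists ρ > 1 such that every γ_j (j ∈ ℤ) satisfies condition (A) for (R, ρ). If limsup_{n→∞} (1/n) Σ_{j=0}^{n−1} log|δ(γ_j)| < 0 and limsup_{n→∞} Leb₄(K_{σⁿ(γ)}⁺) > 0, then Leb₄(K_γ⁺) = ∞. -/

import Mathlib

open Complex Filter Set Topology MeasureTheory Bornology

noncomputable section

/-- A Hénon-form map `f(x,y) = (y + a, p(y) - δ x)` with `δ ≠ 0` and `deg p ≥ 2`. -/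
structure HenonMap : Type where
  a : ℂ
  δ : ℂ
  p : Polynomial ℂ
  hδ : δ ≠ 0
  hdeg : 2 ≤ p.natDegree

namespace HenonMap

/-- The map itself. -/
def toFun (f : HenonMap) (z : ℂ × ℂ) : ℂ × ℂ :=
  (z.2 + f.a, f.p.eval z.2 - f.δ * z.1)

/-- The inverse map `f⁻¹(x,y) = (δ⁻¹ (p(x - a) - y), x - a)`. -/
def invFun (f : HenonMap) (z : ℂ × ℂ) : ℂ × ℂ :=
  (f.δ⁻¹ * (f.p.eval (z.1 - f.a) - z.2), z.1 - f.a)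

end HenonMap

/-- `V_R⁺ = {(x,y) : max(R,|x|) < |y|}`. -/
def VPlus (R : ℝ) : Set (ℂ × ℂ) := {z | max R (‖z.1‖) < ‖z.2‖}

/-- `V_R⁻ = {(x,y) : max(R,|y|) < |x|}`. -/
def VMinus (R : ℝ) : Set (ℂ × ℂ) := {z | max R (‖z.2‖) < ‖z.1‖}

/-- `D_R = {(x,y) : max(|x|,|y|) < R}`. -/
def DDisk (R : ℝ) : Set (ℂ × ℂ) := {z | max (‖z.1‖) (‖z.2‖) < R}

/-- Condition (A) for `(R, ρ)`. -/
def CondA (f : HenonMap) (R ρ : ℝ) : Prop :=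
  (∀ z ∈ closure (VPlus R),
    f.toFun z ∈ VPlus R ∧ ρ * ‖z.2‖ < ‖(f.toFun z).2‖) ∧
  (∀ z ∈ closure (VMinus R),
    f.invFun z ∈ VMinus R ∧ ρ * ‖z.1‖ < ‖(f.invFun z).1‖)

/-- A parameter-bounded family of Hénon-form maps. -/
def ParamBounded (Γ : Set HenonMap) : Prop :=
  ∃ (D : ℕ) (A d₀ Δ m M : ℝ),
    2 ≤ D ∧ 0 ≤ A ∧ 0 < d₀ ∧ d₀ ≤ Δ ∧ 0 < m ∧ m ≤ M ∧
    ∀ f ∈ Γ,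
      f.p.natDegree ≤ D ∧ ‖f.a‖ ≤ A ∧
      d₀ ≤ ‖f.δ‖ ∧ ‖f.δ‖ ≤ Δ ∧
      (∀ i : ℕ, ‖(f.p.coeff i)‖ ≤ M) ∧
      m ≤ ‖f.p.leadingCoeff‖

/-- Forward composition: `fwd γ n = γ_{n-1} ∘ ⋯ ∘ γ₀`. -/
def fwd (γ : ℤ → HenonMap) : ℕ → (ℂ × ℂ) → ℂ × ℂ
  | 0 => id
  | n + 1 => fun z => (γ (n : ℤ)).toFun (fwd γ n z)

/-- Backward composition: `bwd γ n = γ_{-n}⁻¹ ∘ ⋯ ∘ γ_{-1}⁻¹`. -/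
def bwd (γ : ℤ → HenonMap) : ℕ → (ℂ × ℂ) → ℂ × ℂ
  | 0 => id
  | n + 1 => fun z => (γ (-((n : ℤ) + 1))).invFun (bwd γ n z)

/-- `K_γ⁺` : points with bounded forward orbit. -/
def KPlus (γ : ℤ → HenonMap) : Set (ℂ × ℂ) :=
  {z | IsBounded (Set.range fun n : ℕ => fwd γ n z)}

/-- `K_γ⁻` : points with bounded backward orbit. -/
def KMinus (γ : ℤ → HenonMap) : Set (ℂ × ℂ) :=
  {z | IsBounded (Set.range fun n : ℕ => bwd γ n z)}

/-- `I_γ⁺` : points whose forward orbit tends to infinity in norm. -/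
def IPlus (γ : ℤ → HenonMap) : Set (ℂ × ℂ) :=
  {z | Tendsto (fun n : ℕ => ‖fwd γ n z‖) atTop atTop}

/-- `I_γ⁻` : points whose backward orbit tends to infinity in norm. -/
def IMinus (γ : ℤ → HenonMap) : Set (ℂ × ℂ) :=
  {z | Tendsto (fun n : ℕ => ‖bwd γ n z‖) atTop atTop}

/-- The iterated shift: `(σⁿ γ)_j = γ_{j+n}`. -/
def shiftIter (γ : ℤ → HenonMap) (n : ℕ) : ℤ → HenonMap := fun j => γ (j + n)

/-- `log⁺ t = max (log t) 0`. -/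
def logPlus (t : ℝ) : ℝ := max (Real.log t) 0

/-- `G_{γ,n}⁺(z) = (deg γ_{n-1} ⋯ deg γ₀)⁻¹ log⁺ ‖γ_{n-1} ∘ ⋯ ∘ γ₀ (z)‖`. -/
def GPlusN (γ : ℤ → HenonMap) (n : ℕ) (z : ℂ × ℂ) : ℝ :=
  (∏ j ∈ Finset.range n, ((γ (j : ℤ)).p.natDegree : ℝ))⁻¹ * logPlus ‖fwd γ n z‖

/-- `G_{γ,n}⁻(z) = (deg γ_{-1} ⋯ deg γ_{-n})⁻¹ log⁺ ‖γ_{-n}⁻¹ ∘ ⋯ ∘ γ_{-1}⁻¹ (z)‖`. -/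
def GMinusN (γ : ℤ → HenonMap) (n : ℕ) (z : ℂ × ℂ) : ℝ :=
  (∏ j ∈ Finset.range n, ((γ (-((j : ℤ) + 1))).p.natDegree : ℝ))⁻¹ * logPlus ‖bwd γ n z‖

section Aux

open MeasureTheory Measure

lemma henon_continuous (f : HenonMap) : Continuous f.toFun :=
  ((continuous_snd.add continuous_const)).prodMk
    ((f.p.continuous.comp continuous_snd).sub (continuous_const.mul continuous_fst))

lemma complex_map_mul (c : ℂ) (hc : c ≠ 0) :
    Measure.map (fun z : ℂ => c * z) volume
      = (ENNReal.ofReal (Complex.normSq c))⁻¹ • volume := by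
  have hdet : LinearMap.det (LinearMap.mul ℝ ℂ c) = Complex.normSq c := by
    rw [show LinearMap.det (LinearMap.mul ℝ ℂ c) = Algebra.norm ℝ c from rfl,
      Algebra.norm_complex_apply]
  have hpos : 0 < Complex.normSq c := Complex.normSq_pos.2 hc
  have h := Measure.map_linearMap_addHaar_eq_smul_addHaar (volume : Measure ℂ)
    (f := LinearMap.mul ℝ ℂ c) (by rw [hdet]; exact hpos.ne')
  have hfun : ⇑(LinearMap.mul ℝ ℂ c) = fun z : ℂ => c * z := rfl
  rw [hfun] at h
  rw [h, hdet, _root_.abs_of_nonneg (by positivity), ENNReal.ofReal_inv_of_pos hpos]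

lemma complex_map_affine (b c : ℂ) (hc : c ≠ 0) :
    Measure.map (fun z : ℂ => b + c * z) volume
      = (ENNReal.ofReal (Complex.normSq c))⁻¹ • volume := by
  have h1 : (fun z : ℂ => b + c * z) = (fun w : ℂ => b + w) ∘ fun z : ℂ => c * z := rfl
  rw [h1, ← Measure.map_map (measurable_const_add b) (measurable_const_mul c),
    complex_map_mul c hc, Measure.map_smul, map_add_left_eq_self]

lemma prod_smul_right (κ : ENNReal) (hκ : κ ≠ ⊤) :
    (volume : Measure ℂ).prod (κ • (volume : Measure ℂ))
      = κ • ((volume : Measure ℂ).prod (volume : Measure ℂ)) := by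
  ext s hs
  rw [Measure.prod_apply hs, Measure.smul_apply, Measure.prod_apply hs, smul_eq_mul,
    ← lintegral_const_mul' _ _ hκ]
  simp_rw [Measure.smul_apply, smul_eq_mul]

lemma henon_vol (f : HenonMap) (S : Set (ℂ × ℂ)) (hS : MeasurableSet S) :
    volume (f.toFun ⁻¹' S) = (ENNReal.ofReal (Complex.normSq f.δ))⁻¹ * volume S := by
  set κ : ENNReal := (ENNReal.ofReal (Complex.normSq f.δ))⁻¹ with hκdef
  have hκtop : κ ≠ ⊤ := by
    rw [hκdef]
    simp [ENNReal.inv_ne_top, ENNReal.ofReal_pos, Complex.normSq_pos.2 f.hδ]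
  have hg : ∀ᵐ a : ℂ ∂(volume : Measure ℂ),
      Measure.map (fun x : ℂ => f.p.eval a - f.δ * x) volume = κ • volume := by
    refine Filter.Eventually.of_forall fun a => ?_
    have : (fun x : ℂ => f.p.eval a - f.δ * x) = fun x : ℂ => f.p.eval a + (-f.δ) * x := by
      funext x; ring
    rw [this, complex_map_affine _ _ (neg_ne_zero.2 f.hδ), Complex.normSq_neg]
  have hgm : Measurable (Function.uncurry fun a x : ℂ => f.p.eval a - f.δ * x) := by
    apply Measurable.sub
    · exact (f.p.continuous.comp continuous_fst).measurable
    · exact (continuous_const.mul continuous_snd).measurable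
  have hF : MeasurePreserving
      (fun q : ℂ × ℂ => (q.1 + f.a, f.p.eval q.1 - f.δ * q.2))
      ((volume : Measure ℂ).prod volume) ((volume : Measure ℂ).prod (κ • volume)) :=
    MeasurePreserving.skew_product (measurePreserving_add_right volume f.a) hgm hg
  have hT : MeasurePreserving f.toFun
      ((volume : Measure ℂ).prod volume) ((volume : Measure ℂ).prod (κ • volume)) := by
    have : f.toFun = (fun q : ℂ × ℂ => (q.1 + f.a, f.p.eval q.1 - f.δ * q.2)) ∘ Prod.swap := rfl
    rw [this]
    exact hF.comp measurePreserving_swap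
  have := hT.measure_preimage (s := S) hS.nullMeasurableSet
  rw [prod_smul_right κ hκtop] at this
  rw [show (volume : Measure (ℂ × ℂ)) = (volume : Measure ℂ).prod volume from rfl, this,
    Measure.smul_apply, smul_eq_mul]

lemma fwd_continuous (γ : ℤ → HenonMap) (n : ℕ) : Continuous (fwd γ n) := by
  induction n with
  | zero => exact continuous_id
  | succ n ih => exact (henon_continuous _).comp ih

lemma vol_fwd (γ : ℤ → HenonMap) (n : ℕ) (S : Set (ℂ × ℂ)) (hS : MeasurableSet S) :
    volume (fwd γ n ⁻¹' S)
      = (∏ j ∈ Finset.range n, ENNReal.ofReal (Complex.normSq (γ (j : ℤ)).δ))⁻¹ * volume S := by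
  induction n generalizing S with
  | zero => simp [fwd]
  | succ n ih =>
    have hpre : fwd γ (n + 1) ⁻¹' S = fwd γ n ⁻¹' ((γ (n : ℤ)).toFun ⁻¹' S) := rfl
    have hS' : MeasurableSet ((γ (n : ℤ)).toFun ⁻¹' S) :=
      hS.preimage (henon_continuous _).measurable
    rw [hpre, ih _ hS', henon_vol _ S hS, Finset.prod_range_succ,
      ENNReal.mul_inv (Or.inr ENNReal.ofReal_ne_top)
        (Or.inr (ENNReal.ofReal_pos.2 (Complex.normSq_pos.2 (γ (n : ℤ)).hδ)).ne'),
      mul_assoc]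

lemma KPlus_measurable (γ : ℤ → HenonMap) : MeasurableSet (KPlus γ) := by
  have h : KPlus γ = ⋃ M : ℕ, ⋂ n : ℕ, {z : ℂ × ℂ | ‖fwd γ n z‖ ≤ (M : ℝ)} := by
    ext z
    simp only [KPlus, Set.mem_setOf_eq, Set.mem_iUnion, Set.mem_iInter]
    constructor
    · intro h
      obtain ⟨C, hC⟩ := isBounded_iff_forall_norm_le.mp h
      obtain ⟨M, hM⟩ := exists_nat_ge C
      exact ⟨M, fun n => (hC _ (Set.mem_range_self n)).trans hM⟩
    · rintro ⟨M, hM⟩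
      exact isBounded_iff_forall_norm_le.mpr
        ⟨M, by rintro x ⟨n, rfl⟩; exact hM n⟩
  rw [h]
  exact MeasurableSet.iUnion fun M => MeasurableSet.iInter fun n =>
    (isClosed_le (continuous_norm.comp (fwd_continuous γ n)) continuous_const).measurableSet

lemma fwd_shift (γ : ℤ → HenonMap) (n m : ℕ) (z : ℂ × ℂ) :
    fwd (shiftIter γ n) m (fwd γ n z) = fwd γ (n + m) z := by
  induction m with
  | zero => rfl
  | succ m ih =>
    have hidx : ((m : ℤ) + (n : ℤ)) = (((n + m : ℕ) : ℤ)) := by push_cast; ring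
    show (shiftIter γ n (m : ℤ)).toFun (fwd (shiftIter γ n) m (fwd γ n z)) = _
    rw [ih, shiftIter, hidx]
    rfl

lemma KPlus_preimage (γ : ℤ → HenonMap) (n : ℕ) :
    KPlus γ = fwd γ n ⁻¹' KPlus (shiftIter γ n) := by
  ext z
  simp only [KPlus, Set.mem_setOf_eq, Set.mem_preimage]
  constructor
  · intro h
    refine h.subset ?_
    rintro _ ⟨m, rfl⟩
    exact ⟨n + m, (fwd_shift γ n m z).symm⟩
  · intro h
    refine Bornology.IsBounded.subset
      ((((Finset.range n).image fun m => fwd γ m z).finite_toSet.isBounded).union h) ?_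
    rintro _ ⟨m, rfl⟩
    rcases lt_or_ge m n with hm | hm
    · exact Or.inl (by simp only [Finset.coe_image, Set.mem_image, Finset.mem_coe,
        Finset.mem_range]; exact ⟨m, hm, rfl⟩)
    · refine Or.inr ⟨m - n, ?_⟩
      show fwd (shiftIter γ n) (m - n) (fwd γ n z) = fwd γ m z
      rw [fwd_shift]
      congr 1
      omega

end Aux

/-- negative limsup of average log-Jacobians plus positive limsup of the
measures of the shifted `K⁺`-sets forces `Leb₄(K_γ⁺) = ∞`. -/
theorem stmt_9 (γ : ℤ → HenonMap) (R₀ : ℝ) (hR₀ : 0 < R₀)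
    (hA : ∀ R : ℝ, R₀ < R → ∃ ρ : ℝ, 1 < ρ ∧ ∀ j : ℤ, CondA (γ j) R ρ)
    (hlim : Filter.limsup
      (fun n : ℕ => ((((1 : ℝ) / n) * ∑ j ∈ Finset.range n,
        Real.log (‖(γ (j : ℤ)).δ‖) : ℝ) : EReal)) Filter.atTop < 0)
    (hK : 0 < Filter.limsup (fun n : ℕ => volume (KPlus (shiftIter γ n))) Filter.atTop) :
    volume (KPlus γ) = ⊤ := by
  -- the volume relation along the shift
  have key : ∀ n : ℕ, volume (KPlus γ)
      = (∏ j ∈ Finset.range n, ENNReal.ofReal (Complex.normSq (γ (j : ℤ)).δ))⁻¹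
          * volume (KPlus (shiftIter γ n)) := by
    intro n
    rw [KPlus_preimage γ n, vol_fwd γ n _ (KPlus_measurable _)]
  -- extract a real bound from the limsup of log-Jacobians
  obtain ⟨x, hx1, hx2⟩ := exists_between hlim
  lift x to ℝ using ⟨ne_top_of_lt hx2, ne_bot_of_gt hx1⟩ with c
  have hc0 : c < 0 := by exact_mod_cast hx2
  have hev : ∀ᶠ n : ℕ in atTop,
      ((1 : ℝ) / n) * ∑ j ∈ Finset.range n, Real.log (‖(γ (j : ℤ)).δ‖) < c := by
    filter_upwards [Filter.eventually_lt_of_limsup_lt hx1] with n hn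
    exact_mod_cast hn
  -- extract a positive lower bound from the limsup of measures
  obtain ⟨ε, hε0, hεlt⟩ := exists_between hK
  have hεtop : ε ≠ ⊤ := ne_top_of_lt hεlt
  have hfreq : ∃ᶠ n : ℕ in atTop, ε < volume (KPlus (shiftIter γ n)) :=
    Filter.frequently_lt_of_lt_limsup (by isBoundedDefault) hεlt
  have hεr : 0 < ε.toReal := ENNReal.toReal_pos hε0.ne' hεtop
  -- conclude
  apply ENNReal.eq_top_of_forall_nnreal_le
  intro M
  have hexp : Tendsto (fun n : ℕ => Real.exp (2 * c * n)) atTop (nhds 0) := by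
    apply Real.tendsto_exp_atBot.comp
    have h2c : 2 * c < 0 := by linarith
    exact Tendsto.const_mul_atTop_of_neg h2c tendsto_natCast_atTop_atTop
  have hexp' : ∀ᶠ n : ℕ in atTop, Real.exp (2 * c * n) < ε.toReal / ((M : ℝ) + 1) := by
    apply hexp.eventually_lt_const
    positivity
  obtain ⟨n, ⟨⟨hn1, hnev⟩, hnexp⟩, hnfr⟩ :=
    (((Filter.eventually_ge_atTop 1).and hev).and hexp').and_frequently hfreq |>.exists
  -- the product of the Jacobian factors at time n
  set Pr : ℝ := ∏ j ∈ Finset.range n, Complex.normSq (γ (j : ℤ)).δ with hPr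
  have hsum : ∑ j ∈ Finset.range n, Real.log (‖(γ (j : ℤ)).δ‖) < c * n := by
    have hn : (0 : ℝ) < n := by exact_mod_cast hn1
    rw [one_div, inv_mul_eq_div] at hnev
    exact (div_lt_iff₀ hn).1 hnev
  have hPrval : Pr = Real.exp (2 * ∑ j ∈ Finset.range n,
      Real.log (‖(γ (j : ℤ)).δ‖)) := by
    rw [hPr, Finset.mul_sum, Real.exp_sum]
    refine Finset.prod_congr rfl fun j _ => ?_
    have habs : (0 : ℝ) < ‖(γ (j : ℤ)).δ‖ :=
      norm_pos_iff.mpr (γ (j : ℤ)).hδ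
    symm
    rw [two_mul, Real.exp_add, ← sq, Real.exp_log habs, Complex.sq_norm]
  have hPrpos : 0 < Pr := by rw [hPrval]; exact Real.exp_pos _
  have hPrle : Pr ≤ Real.exp (2 * c * n) := by
    rw [hPrval]
    exact Real.exp_le_exp.2 (by nlinarith)
  have hprod : (∏ j ∈ Finset.range n, ENNReal.ofReal (Complex.normSq (γ (j : ℤ)).δ))
      = ENNReal.ofReal Pr := by
    rw [hPr, ENNReal.ofReal_prod_of_nonneg]
    intro j _
    exact Complex.normSq_nonneg _
  have hPn0 : ENNReal.ofReal Pr ≠ 0 := (ENNReal.ofReal_pos.2 hPrpos).ne'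
  have hPntop : ENNReal.ofReal Pr ≠ ⊤ := ENNReal.ofReal_ne_top
  -- M * Pn ≤ ε
  have hMP : (M : ENNReal) * ENNReal.ofReal Pr ≤ ε := by
    have h1 : (M : ℝ) * Pr ≤ ε.toReal := by
      have h2 : (M : ℝ) * Pr ≤ ((M : ℝ) + 1) * Real.exp (2 * c * n) := by
        have := hPrle
        have hM0 : (0 : ℝ) ≤ (M : ℝ) := M.coe_nonneg
        nlinarith [Real.exp_pos (2 * c * n)]
      have h3 : ((M : ℝ) + 1) * Real.exp (2 * c * n) < ε.toReal := by
        rw [mul_comm, ← lt_div_iff₀ (by positivity)]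
        exact hnexp
      linarith
    calc (M : ENNReal) * ENNReal.ofReal Pr
        = ENNReal.ofReal ((M : ℝ) * Pr) := by
          rw [ENNReal.ofReal_mul M.coe_nonneg, ENNReal.ofReal_coe_nnreal]
      _ ≤ ENNReal.ofReal ε.toReal := ENNReal.ofReal_le_ofReal h1
      _ = ε := ENNReal.ofReal_toReal hεtop
  have hfinal : (M : ENNReal) ≤ ε / ENNReal.ofReal Pr :=
    (ENNReal.le_div_iff_mul_le (Or.inl hPn0) (Or.inl hPntop)).2 hMP
  calc (M : ENNReal) ≤ ε / ENNReal.ofReal Pr := hfinal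
    _ ≤ volume (KPlus (shiftIter γ n)) / ENNReal.ofReal Pr :=
        ENNReal.div_le_div_right hnfr.le _
    _ = (ENNReal.ofReal Pr)⁻¹ * volume (KPlus (shiftIter γ n)) := by
        rw [ENNReal.div_eq_inv_mul]
    _ = volume (KPlus γ) := by rw [key n, hprod]
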